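/- Let p, q be integers with 1 ≤ p < q. A Britton-reduced word u = a^{α_0} θ_1 a^{α_1} ⋯ θ_k a^{α_k} represents an element of the cyclic subgroup ⟨a⟩ of BS(p,q) if and only if k = 0. Moreover, the map ℤ → BS(p,q), α ↦ (the element represented by a^α), is injective: a^α and a^β represent the same element of BS(p,q) if and only if α = β. -/

import Mathlib

inductive Letter : Type
  | a | A | t | T
  deriving DecidableEq

def bsRel (p q : ℤ) : Set (FreeGroup Bool) :=
  {FreeGroup.of true * (FreeGroup.of false) ^ p * (FreeGroup.of true)⁻¹ * (FreeGroup.of false) ^ (-q)}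

abbrev BS (p q : ℤ) := PresentedGroup (bsRel p q)

def evalLetter (p q : ℤ) : Letter → BS p q
  | .a => PresentedGroup.of false
  | .A => (PresentedGroup.of false)⁻¹
  | .t => PresentedGroup.of true
  | .T => (PresentedGroup.of true)⁻¹

def eval (p q : ℤ) (w : List Letter) : BS p q := (w.map (evalLetter p q)).prod

def aPow (α : ℤ) : List Letter :=
  if 0 ≤ α then List.replicate α.toNat Letter.a else List.replicate (-α).toNat Letter.A

def Geodesic (p q : ℤ) (w : List Letter) : Prop :=
  ∀ v : List Letter, eval p q v = eval p q w → w.length ≤ v.length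

/-- Ranking of letters in the order `t < T < a < A`. -/
def letterIdx : Letter → ℕ
  | .t => 0
  | .T => 1
  | .a => 2
  | .A => 3

/-- Length-lexicographical strict order on words, with letters ordered `t < T < a < A`. -/
def llLt (u v : List Letter) : Prop :=
  u.length < v.length ∨
    (u.length = v.length ∧ List.Lex (· < ·) (u.map letterIdx) (v.map letterIdx))

/-- `IsLlnf p q v w` : `v` is the length-lexicographical normal form of `w`,
i.e. `v` represents the same element as `w` and no word representing this element
precedes `v` in the length-lexicographical order. -/
def IsLlnf (p q : ℤ) (v w : List Letter) : Prop :=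
  eval p q v = eval p q w ∧ ∀ u : List Letter, eval p q u = eval p q w → ¬ llLt u v

/-- A word contains no factors `a a⁻¹` or `a⁻¹ a`. -/
def Reduced (w : List Letter) : Prop :=
  (∀ u v : List Letter, w ≠ u ++ [Letter.a, Letter.A] ++ v) ∧
  (∀ u v : List Letter, w ≠ u ++ [Letter.A, Letter.a] ++ v)

/-- A word is Britton-reduced: it has no factors `a a⁻¹`, `a⁻¹ a`,
`t a^{pμ} t⁻¹` or `t⁻¹ a^{qμ} t` (with `μ ∈ ℤ`). -/
def BrittonReduced (p q : ℤ) (w : List Letter) : Prop :=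
  Reduced w ∧
  (∀ u v : List Letter, ∀ μ : ℤ, w ≠ u ++ [Letter.t] ++ aPow (p * μ) ++ [Letter.T] ++ v) ∧
  (∀ u v : List Letter, ∀ μ : ℤ, w ≠ u ++ [Letter.T] ++ aPow (q * μ) ++ [Letter.t] ++ v)

/-- The t-sequence of a word: its subsequence of letters from `{t, t⁻¹}`. -/
def tSeq (w : List Letter) : List Letter :=
  w.filter (fun c => c == Letter.t || c == Letter.T)

/-- The geodesic length of a group element: the least length of a word representing it. -/
noncomputable def geodesicLength (p q : ℤ) (g : BS p q) : ℕ :=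
  sInf {n : ℕ | ∃ w : List Letter, eval p q w = g ∧ w.length = n}

/-- A valley: every prefix has height `≤ 0` and the total height is `0`,
where the height of a prefix is (number of `t`'s) − (number of `t⁻¹`'s). -/
def IsValley (w : List Letter) : Prop :=
  (∀ u v : List Letter, w = u ++ v → u.count Letter.t ≤ u.count Letter.T) ∧
  w.count Letter.t = w.count Letter.T


/-- The word `a^{α_0} θ_1 a^{α_1} ⋯ θ_k a^{α_k}`. -/
def buildWord (k : ℕ) (αs : Fin (k + 1) → ℤ) (θs : Fin k → Letter) : List Letter :=
  aPow (αs 0) ++ (List.ofFn fun i : Fin k => θs i :: aPow (αs i.succ)).flatten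

open Multiplicative HNNExtension


abbrev Ap (p : ℤ) : Subgroup (Multiplicative ℤ) := Subgroup.zpowers (ofAdd p)

lemma ofAdd_pow (a n : ℤ) : ofAdd a ^ n = ofAdd (n * a) := by
  rw [← ofAdd_zsmul]; simp

def psi (p : ℤ) : Multiplicative ℤ →* Ap p where
  toFun n := ⟨ofAdd (n.toAdd * p), ⟨n.toAdd, (ofAdd_pow p n.toAdd)⟩⟩
  map_one' := by ext; simp
  map_mul' x y := Subtype.ext (by show ofAdd (toAdd (x*y) * p) = ofAdd (toAdd x * p) * ofAdd (toAdd y * p); rw [toAdd_mul, add_mul, ofAdd_add])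

lemma psi_bijective (p : ℤ) (hp : p ≠ 0) : Function.Bijective (psi p) := by
  constructor
  · intro x y h
    have h2 : ofAdd (x.toAdd * p) = ofAdd (y.toAdd * p) := congrArg Subtype.val h
    exact toAdd.injective (mul_right_cancel₀ hp (ofAdd.injective h2))
  · rintro ⟨x, n, rfl⟩
    exact ⟨ofAdd n, Subtype.ext (ofAdd_pow p n).symm⟩

noncomputable def psiE (p : ℤ) (hp : p ≠ 0) : Multiplicative ℤ ≃* Ap p :=
  MulEquiv.ofBijective (psi p) (psi_bijective p hp)

noncomputable def phi (p q : ℤ) (hp : p ≠ 0) (hq : q ≠ 0) : Ap p ≃* Ap q :=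
  (psiE p hp).symm.trans (psiE q hq)

lemma coe_psiE (p : ℤ) (hp : p ≠ 0) (n : ℤ) :
    ((psiE p hp (ofAdd n) : Ap p) : Multiplicative ℤ) = ofAdd (n * p) := rfl

abbrev HN (p q : ℤ) (hp : p ≠ 0) (hq : q ≠ 0) :=
  HNNExtension (Multiplicative ℤ) (Ap p) (Ap q) (phi p q hp hq)

noncomputable def theta (p q : ℤ) (hp : p ≠ 0) (hq : q ≠ 0) : BS p q →* HN p q hp hq :=
  PresentedGroup.toGroup (f := fun b => bif b then t else of (ofAdd 1)) <| by
    rintro r rfl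
    simp only [map_mul, map_zpow, map_inv, FreeGroup.lift_apply_of, Bool.cond_true, Bool.cond_false]
    have h1 : (of (ofAdd 1) : HN p q hp hq) ^ p
        = of ((psiE p hp (ofAdd 1) : Ap p) : Multiplicative ℤ) := by
      rw [← map_zpow, ofAdd_pow, coe_psiE, one_mul, mul_one]
    have h2 : (of (ofAdd 1) : HN p q hp hq) ^ (-q)
        = (of ((psiE q hq (ofAdd 1) : Ap q) : Multiplicative ℤ))⁻¹ := by
      rw [← map_zpow, ofAdd_pow, ← map_inv, coe_psiE, ← ofAdd_neg]
      have : -q * 1 = -(1 * q) := by ring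
      rw [this]
    rw [h1, h2]
    have h3 : phi p q hp hq (psiE p hp (ofAdd 1)) = psiE q hq (ofAdd 1) := by
      simp [phi]
    rw [← h3, equiv_eq_conj]
    group

lemma theta_of_a (p q : ℤ) (hp : p ≠ 0) (hq : q ≠ 0) :
    theta p q hp hq (PresentedGroup.of false) = of (ofAdd 1) :=
  PresentedGroup.toGroup.of _

lemma theta_of_t (p q : ℤ) (hp : p ≠ 0) (hq : q ≠ 0) :
    theta p q hp hq (PresentedGroup.of true) = t :=
  PresentedGroup.toGroup.of _

lemma eval_append (p q : ℤ) (u v : List Letter) :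
    eval p q (u ++ v) = eval p q u * eval p q v := by
  simp [eval]

lemma eval_aPow (p q : ℤ) (α : ℤ) :
    eval p q (aPow α) = (PresentedGroup.of false : BS p q) ^ α := by
  unfold aPow
  split_ifs with h
  · rw [eval, List.map_replicate, List.prod_replicate]
    rw [show evalLetter p q Letter.a = (PresentedGroup.of false : BS p q) from rfl,
      ← zpow_natCast, Int.toNat_of_nonneg h]
  · rw [eval, List.map_replicate, List.prod_replicate]
    rw [show evalLetter p q Letter.A = (PresentedGroup.of false : BS p q)⁻¹ from rfl,
      inv_pow, ← zpow_natCast, Int.toNat_of_nonneg (by omega), ← zpow_neg, neg_neg]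

lemma theta_eval_aPow (p q : ℤ) (hp : p ≠ 0) (hq : q ≠ 0) (α : ℤ) :
    theta p q hp hq (eval p q (aPow α)) = of (ofAdd α) := by
  rw [eval_aPow, map_zpow, theta_of_a, ← map_zpow, ofAdd_pow, mul_one]

lemma aPow_injective (p q : ℤ) (hp : p ≠ 0) (hq : q ≠ 0) (α β : ℤ)
    (h : eval p q (aPow α) = eval p q (aPow β)) : α = β := by
  have h2 := congrArg (theta p q hp hq) h
  rw [theta_eval_aPow, theta_eval_aPow] at h2
  exact ofAdd.injective (HNNExtension.of_injective (φ := phi p q hp hq) h2)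

def uLet : Letter → ℤˣ
  | .t => 1
  | _ => -1

lemma theta_eval_buildWord (p q : ℤ) (hp : p ≠ 0) (hq : q ≠ 0) (k : ℕ)
    (αs : Fin (k + 1) → ℤ) (θs : Fin k → Letter)
    (hθ : ∀ i, θs i = Letter.t ∨ θs i = Letter.T) :
    theta p q hp hq (eval p q (buildWord k αs θs)) =
      of (ofAdd (αs 0)) *
        ((List.ofFn fun i : Fin k =>
          (t : HN p q hp hq) ^ ((uLet (θs i) : ℤˣ) : ℤ) * of (ofAdd (αs i.succ))).prod) := by
  rw [buildWord, eval_append, map_mul, theta_eval_aPow]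
  congr 1
  rw [eval]
  rw [List.map_flatten, List.prod_flatten, map_list_prod]
  rw [List.map_ofFn, List.map_ofFn, List.map_ofFn]
  refine congrArg List.prod (congrArg List.ofFn (funext fun i => ?_))
  show theta p q hp hq ((evalLetter p q (θs i) :: (aPow (αs i.succ)).map (evalLetter p q)).prod) = _
  rw [List.prod_cons, map_mul]
  have h2 : theta p q hp hq ((aPow (αs i.succ)).map (evalLetter p q)).prod = of (ofAdd (αs i.succ)) :=
    theta_eval_aPow p q hp hq (αs i.succ)
  rw [h2]
  congr 1
  rcases hθ i with h | h <;> rw [h]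
  · show theta p q hp hq (PresentedGroup.of true) = _
    rw [theta_of_t]; simp [uLet]
  · show theta p q hp hq (PresentedGroup.of true)⁻¹ = _
    rw [map_inv, theta_of_t]; simp [uLet]

lemma buildWord_decomp (k : ℕ) (αs : Fin (k + 1) → ℤ) (θs : Fin k → Letter)
    (i : ℕ) (hi : i + 1 < k) :
    ∃ u v : List Letter, buildWord k αs θs =
      u ++ [θs ⟨i, by omega⟩] ++ aPow (αs (Fin.succ ⟨i, by omega⟩)) ++ [θs ⟨i + 1, hi⟩] ++ v := by
  set f : Fin k → List Letter := fun j => θs j :: aPow (αs j.succ) with hf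
  set L := List.ofFn f with hLdef
  have hlen : L.length = k := by simp [hLdef]
  have h1 : i < L.length := by omega
  have h2 : i + 1 < L.length := by omega
  have hL : L = L.take i ++ f ⟨i, by omega⟩ :: f ⟨i + 1, hi⟩ :: L.drop (i + 2) := by
    conv_lhs => rw [← List.take_append_drop i L]
    rw [List.drop_eq_getElem_cons h1, List.drop_eq_getElem_cons (by omega : i + 1 < L.length)]
    simp [hLdef, List.getElem_ofFn]
  refine ⟨aPow (αs 0) ++ (L.take i).flatten,
    aPow (αs (Fin.succ ⟨i + 1, hi⟩)) ++ (L.drop (i + 2)).flatten, ?_⟩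
  rw [buildWord, ← hLdef]
  conv_lhs => rw [hL]
  rw [List.flatten_append, List.flatten_cons, List.flatten_cons]
  simp only [hf, List.append_assoc, List.cons_append, List.nil_append, List.singleton_append]

theorem horocyclic_iff_k_eq_zero (p q : ℤ) (hp : 1 ≤ p) (hpq : p < q) :
    (∀ (k : ℕ) (αs : Fin (k + 1) → ℤ) (θs : Fin k → Letter),
      (∀ i, θs i = Letter.t ∨ θs i = Letter.T) →
      BrittonReduced p q (buildWord k αs θs) →
      (eval p q (buildWord k αs θs) ∈ Subgroup.zpowers (evalLetter p q Letter.a) ↔ k = 0)) ∧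
    (∀ α β : ℤ, eval p q (aPow α) = eval p q (aPow β) ↔ α = β) := by
  have hp0 : p ≠ 0 := by omega
  have hq0 : q ≠ 0 := by omega
  constructor
  · intro k αs θs hθ hBR
    constructor
    · intro hmem
      -- build the reduced word in the HNN extension
      set g : Fin k → ℤˣ × Multiplicative ℤ :=
        fun i => (uLet (θs i), ofAdd (αs i.succ)) with hg
      have hchain : (List.ofFn g).Chain'
          (fun a b => a.2 ∈ toSubgroup (Ap p) (Ap q) a.1 → a.1 = b.1) := by
        show List.IsChain _ _; rw [List.isChain_ofFn]
        intro i hi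
        rcases hθ ⟨i, by omega⟩ with h | h <;> rcases hθ ⟨i + 1, hi⟩ with h' | h' <;>
            simp only [hg, h, h', uLet] <;> intro hmem2
        · trivial
        · exfalso
          rw [toSubgroup_one] at hmem2
          obtain ⟨μ, hμ⟩ := Subgroup.mem_zpowers_iff.mp hmem2
          rw [ofAdd_pow] at hμ
          have hval : p * μ = αs (Fin.succ ⟨i, by omega⟩) := by
            rw [mul_comm]; exact ofAdd.injective hμ
          obtain ⟨u, v, huv⟩ := buildWord_decomp k αs θs i hi
          exact hBR.2.1 u v μ (by rw [huv, h, h', hval])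
        · exfalso
          rw [toSubgroup_neg_one] at hmem2
          obtain ⟨μ, hμ⟩ := Subgroup.mem_zpowers_iff.mp hmem2
          rw [ofAdd_pow] at hμ
          have hval : q * μ = αs (Fin.succ ⟨i, by omega⟩) := by
            rw [mul_comm]; exact ofAdd.injective hμ
          obtain ⟨u, v, huv⟩ := buildWord_decomp k αs θs i hi
          exact hBR.2.2 u v μ (by rw [huv, h, h', hval])
        · trivial
      set w' : NormalWord.ReducedWord (Multiplicative ℤ) (Ap p) (Ap q) :=
        ⟨ofAdd (αs 0), List.ofFn g, hchain⟩ with hw'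
      have hprod : w'.prod (phi p q hp0 hq0) =
          theta p q hp0 hq0 (eval p q (buildWord k αs θs)) := by
        rw [theta_eval_buildWord p q hp0 hq0 k αs θs hθ]
        simp only [NormalWord.ReducedWord.prod, hw', List.map_ofFn, hg]
        rfl
      have hrange : w'.prod (phi p q hp0 hq0) ∈
          (of.range : Subgroup (HN p q hp0 hq0)) := by
        rw [hprod]
        obtain ⟨n, hn⟩ := Subgroup.mem_zpowers_iff.mp hmem
        rw [← hn]
        rw [show evalLetter p q Letter.a = (PresentedGroup.of false : BS p q) from rfl]
        rw [map_zpow, theta_of_a, ← map_zpow]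
        exact ⟨_, rfl⟩
      have := HNNExtension.ReducedWord.toList_eq_nil_of_mem_of_range (phi p q hp0 hq0) w' hrange
      simpa [hw', List.ofFn_eq_nil_iff] using this
    · intro hk
      subst hk
      have : buildWord 0 αs θs = aPow (αs 0) := by
        simp [buildWord]
      rw [this, eval_aPow]
      exact Subgroup.zpow_mem _ (Subgroup.mem_zpowers _) _
  · intro α β
    exact ⟨aPow_injective p q hp0 hq0 α β, fun h => by rw [h]⟩
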